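/- Let p be a prime, h ≥ 3, and θ a primitive element of F_{p^{h−1}}. Then the set GT(p,h,θ) = {(a, log_θ(θ + a)) : a ∈ F_p} is a B_h set in Z/pZ × Z/(p^{h−1} − 1)Z with p elements. -/

import Mathlib

/-- Additive `B_h[g]` property. -/
def IsBhg {G : Type*} [AddCommMonoid G] (A : Set G) (h g : ℕ) : Prop :=
  ∀ b : G, ∀ s : Finset (Multiset G),
    (∀ m ∈ s, Multiset.card m = h ∧ (∀ x ∈ m, x ∈ A) ∧ m.sum = b) → s.card ≤ g

lemma ofAdd_multiset_sum {A : Type*} [AddCommMonoid A] (m : Multiset A) :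
    Multiplicative.ofAdd m.sum = (m.map Multiplicative.ofAdd).prod := by
  induction m using Multiset.induction with
  | empty => simp
  | cons a s ih => simp [ih]

open Polynomial

set_option maxHeartbeats 1000000

theorem stmt_14 (p h : ℕ) [Fact p.Prime] (hh : 3 ≤ h)
    {F : Type*} [Field F] [Fintype F] [Algebra (ZMod p) F]
    (hcard : Fintype.card F = p ^ (h - 1))
    (θ : Fˣ) (hθ : ∀ x : Fˣ, x ∈ Subgroup.zpowers θ)
    -- `e` is the discrete logarithm to base `θ`
    (e : Fˣ ≃* Multiplicative (ZMod (p ^ (h - 1) - 1)))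
    (he : e θ = Multiplicative.ofAdd 1) :
    IsBhg {x : ZMod p × ZMod (p ^ (h - 1) - 1) | ∃ a : ZMod p, ∃ u : Fˣ,
        (u : F) = (θ : F) + algebraMap (ZMod p) F a ∧
        x = (a, Multiplicative.toAdd (e u))} h 1 ∧
    Set.ncard {x : ZMod p × ZMod (p ^ (h - 1) - 1) | ∃ a : ZMod p, ∃ u : Fˣ,
        (u : F) = (θ : F) + algebraMap (ZMod p) F a ∧
        x = (a, Multiplicative.toAdd (e u))} = p := by
  classical
  have hp : p.Prime := Fact.out
  have hp2 : 2 ≤ p := hp.two_le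
  have hqp : p < p ^ (h - 1) := by
    calc p = p ^ 1 := (pow_one p).symm
    _ < p ^ (h - 1) := Nat.pow_lt_pow_right hp.one_lt (by omega)
  have hq2 : 2 ≤ p ^ (h - 1) := by omega
  have hcardU : Fintype.card Fˣ = p ^ (h - 1) - 1 := by
    rw [Fintype.card_units, hcard]
  have horder : orderOf θ = p ^ (h - 1) - 1 := by
    rw [orderOf_eq_card_of_forall_mem_zpowers hθ, Nat.card_eq_fintype_card, hcardU]
  -- θ + a is never zero
  have hne : ∀ a : ZMod p, (θ : F) + algebraMap (ZMod p) F a ≠ 0 := by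
    intro a hc
    have hθa : (θ : F) = algebraMap (ZMod p) F (-a) := by
      rw [map_neg]; linear_combination hc
    have ha0 : -a ≠ 0 := by
      rintro h0
      rw [h0, map_zero] at hθa
      exact θ.ne_zero hθa
    have hpow : θ ^ (p - 1) = 1 := by
      ext
      push_cast
      rw [hθa, ← map_pow, ZMod.pow_card_sub_one_eq_one ha0, map_one]
    have hdvd := orderOf_dvd_of_pow_eq_one hpow
    rw [horder] at hdvd
    have := Nat.le_of_dvd (by omega) hdvd
    omega
  set U : ZMod p → Fˣ := fun a => Units.mk0 _ (hne a) with hU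
  set ψ : ZMod p → ZMod p × ZMod (p ^ (h - 1) - 1) :=
    fun a => (a, Multiplicative.toAdd (e (U a))) with hψ
  set S : Set (ZMod p × ZMod (p ^ (h - 1) - 1)) := {x | ∃ a : ZMod p, ∃ u : Fˣ,
        (u : F) = (θ : F) + algebraMap (ZMod p) F a ∧
        x = (a, Multiplicative.toAdd (e u))} with hS
  have hAx : ∀ x ∈ S, x = ψ x.1 := by
    rintro x ⟨a, u, hu, rfl⟩
    have : u = U a := Units.ext (by rw [hu]; rfl)
    simp [hψ, this]
  have hrange : S = Set.range ψ := by
    ext x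
    constructor
    · intro hx
      exact ⟨x.1, (hAx x hx).symm⟩
    · rintro ⟨a, rfl⟩
      exact ⟨a, U a, rfl, rfl⟩
  -- finrank of F over the prime field is h - 1
  have hfr : Module.finrank (ZMod p) F = h - 1 := by
    have := Module.card_eq_pow_finrank (K := ZMod p) (V := F)
    rw [hcard, ZMod.card] at this
    exact Nat.pow_right_injective hp2 this.symm
  have hint : IsIntegral (ZMod p) ((θ : F)) := IsIntegral.of_finite _ _
  -- θ generates F as an algebra
  have hadj : Algebra.adjoin (ZMod p) {((θ : F))} = ⊤ := by
    rw [eq_top_iff]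
    rintro x -
    rcases eq_or_ne x 0 with rfl | hx
    · exact zero_mem _
    obtain ⟨n, hn⟩ := mem_powers_iff_mem_zpowers.mpr (hθ (Units.mk0 x hx))
    have hxn : x = (θ : F) ^ n := by
      have := congrArg (Units.val) hn
      push_cast at this
      rw [this]
      exact (Units.val_mk0 hx).symm
    rw [hxn]
    exact pow_mem (Algebra.subset_adjoin (Set.mem_singleton _)) n
  have hadjF : IntermediateField.adjoin (ZMod p) {((θ : F))} = ⊤ := by
    apply IntermediateField.toSubalgebra_injective
    rw [IntermediateField.adjoin_simple_toSubalgebra_of_isAlgebraic hint.isAlgebraic, hadj,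
      IntermediateField.top_toSubalgebra]
  have hmin : (minpoly (ZMod p) ((θ : F))).natDegree = h - 1 := by
    rw [← IntermediateField.adjoin.finrank hint, hadjF, IntermediateField.finrank_top', hfr]
  -- evaluation of the product polynomial at θ
  have heval : ∀ A : Multiset (ZMod p),
      (Polynomial.aeval ((θ : F))) ((A.map fun a => X - C (-a)).prod)
        = (((A.map U).prod : Fˣ) : F) := by
    intro A
    rw [map_multiset_prod, Multiset.map_map]
    have h2 : (((A.map U).prod : Fˣ) : F) = ((A.map U).map (Units.coeHom F)).prod := by
      rw [← map_multiset_prod]; rfl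
    rw [h2, Multiset.map_map]
    exact congrArg Multiset.prod
      (Multiset.map_congr rfl fun a _ => by simp [hU, sub_neg_eq_add])
  -- facts about the product polynomial
  have hmon : ∀ A : Multiset (ZMod p), ((A.map fun a => X - C (-a)).prod).Monic :=
    fun A => monic_multiset_prod_of_monic _ _ (fun a _ => monic_X_sub_C _)
  have hdegf : ∀ A : Multiset (ZMod p), Multiset.card A = h →
      ((A.map fun a => X - C (-a)).prod).natDegree = h := by
    intro A hA
    rw [natDegree_multiset_prod_of_monic _ (fun f hf => by
      obtain ⟨a, _, rfl⟩ := Multiset.mem_map.mp hf; exact monic_X_sub_C _)]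
    rw [Multiset.map_map]
    simp [Function.comp_def, natDegree_X_sub_C, hA]
  have hcoeff : ∀ A : Multiset (ZMod p), Multiset.card A = h →
      ((A.map fun a => X - C (-a)).prod).coeff (h - 1) = A.sum := by
    intro A hA
    have h1 : ((A.map fun a => X - C (-a)).prod).nextCoeff = A.sum := by
      rw [Monic.nextCoeff_multiset_prod _ _ (fun a _ => monic_X_sub_C _)]
      simp [nextCoeff_X_sub_C]
    rwa [nextCoeff_of_natDegree_pos (by rw [hdegf A hA]; omega), hdegf A hA] at h1
  have hroots : ∀ A : Multiset (ZMod p),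
      ((A.map fun a => X - C (-a)).prod).roots = A.map (fun a => -a) := by
    intro A
    have : (A.map fun a => X - C (-a)) = ((A.map fun a => -a).map fun r => X - C r) := by
      rw [Multiset.map_map]; rfl
    rw [this]
    exact roots_multiset_prod_X_sub_C _
  -- key lemma: decomposition of a representing multiset
  have key : ∀ (b : ZMod p × ZMod (p ^ (h - 1) - 1))
      (m : Multiset (ZMod p × ZMod (p ^ (h - 1) - 1))),
      (∀ x ∈ m, x ∈ S) → m.sum = b →
      m = (m.map Prod.fst).map ψ ∧ (m.map Prod.fst).sum = b.1 ∧
        e ((m.map Prod.fst).map U).prod = Multiplicative.ofAdd b.2 := by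
    intro b m hmem hsum
    refine ⟨?_, ?_, ?_⟩
    · rw [Multiset.map_map]
      conv_lhs => rw [← Multiset.map_id m]
      exact Multiset.map_congr rfl fun x hx => hAx x (hmem x hx)
    · have h2 := map_multiset_sum (AddMonoidHom.fst (ZMod p) (ZMod (p ^ (h - 1) - 1))) m
      rw [hsum] at h2
      simpa using h2.symm
    · rw [Multiset.map_map, map_multiset_prod, Multiset.map_map]
      have h3 : ∀ x ∈ m, (e ∘ U ∘ Prod.fst) x = Multiplicative.ofAdd x.2 := by
        intro x hx
        have h4 := congrArg Prod.snd (hAx x (hmem x hx))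
        simp only [hψ] at h4
        simp only [Function.comp_apply]
        rw [h4]; simp
      rw [Multiset.map_congr rfl h3]
      have h5 : (m.map fun x => Multiplicative.ofAdd x.2)
          = ((m.map Prod.snd).map Multiplicative.ofAdd) := by rw [Multiset.map_map]; rfl
      rw [h5, ← ofAdd_multiset_sum]
      have h6 := map_multiset_sum (AddMonoidHom.snd (ZMod p) (ZMod (p ^ (h - 1) - 1))) m
      rw [hsum] at h6
      have h7 : (m.map Prod.snd).sum = b.2 := by simpa using h6.symm
      rw [h7]
  -- uniqueness of representations
  have uniq : ∀ (b : ZMod p × ZMod (p ^ (h - 1) - 1))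
      (m₁ m₂ : Multiset (ZMod p × ZMod (p ^ (h - 1) - 1))),
      Multiset.card m₁ = h → (∀ x ∈ m₁, x ∈ S) → m₁.sum = b →
      Multiset.card m₂ = h → (∀ x ∈ m₂, x ∈ S) → m₂.sum = b → m₁ = m₂ := by
    intro b m₁ m₂ hc₁ hm₁ hs₁ hc₂ hm₂ hs₂
    obtain ⟨hrec₁, hsum₁, hprod₁⟩ := key b m₁ hm₁ hs₁
    obtain ⟨hrec₂, hsum₂, hprod₂⟩ := key b m₂ hm₂ hs₂
    set A₁ := m₁.map Prod.fst with hA₁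
    set A₂ := m₂.map Prod.fst with hA₂
    have hcA₁ : Multiset.card A₁ = h := by rw [hA₁, Multiset.card_map, hc₁]
    have hcA₂ : Multiset.card A₂ = h := by rw [hA₂, Multiset.card_map, hc₂]
    have hprod : (((A₁.map U).prod : Fˣ) : F) = (((A₂.map U).prod : Fˣ) : F) := by
      have := e.injective (hprod₁.trans hprod₂.symm)
      rw [this]
    have hfeq : (A₁.map fun a => X - C (-a)).prod = (A₂.map fun a => X - C (-a)).prod := by
      by_contra hne'
      have hd0 : (A₁.map fun a => X - C (-a)).prod - (A₂.map fun a => X - C (-a)).prod ≠ 0 :=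
        sub_ne_zero_of_ne hne'
      have hroot : (Polynomial.aeval ((θ : F)))
          ((A₁.map fun a => X - C (-a)).prod - (A₂.map fun a => X - C (-a)).prod) = 0 := by
        rw [map_sub, heval, heval, hprod, sub_self]
      have hdvd := minpoly.dvd (ZMod p) ((θ : F)) hroot
      have hge := Polynomial.natDegree_le_of_dvd hdvd hd0
      rw [hmin] at hge
      have hle : ((A₁.map fun a => X - C (-a)).prod
          - (A₂.map fun a => X - C (-a)).prod).natDegree ≤ h - 2 := by
        rw [natDegree_le_iff_coeff_eq_zero]
        intro N hN
        rw [coeff_sub]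
        rcases lt_trichotomy N h with hlt | rfl | hgt
        · have hN1 : N = h - 1 := by omega
          subst hN1
          rw [hcoeff A₁ hcA₁, hcoeff A₂ hcA₂, hsum₁, hsum₂, sub_self]
        · have c₁ := (hmon A₁).coeff_natDegree
          have c₂ := (hmon A₂).coeff_natDegree
          rw [hdegf A₁ hcA₁] at c₁
          rw [hdegf A₂ hcA₂] at c₂
          rw [c₁, c₂, sub_self]
        · rw [coeff_eq_zero_of_natDegree_lt (by rw [hdegf A₁ hcA₁]; exact hgt),
            coeff_eq_zero_of_natDegree_lt (by rw [hdegf A₂ hcA₂]; exact hgt), sub_self]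
      omega
    have hAeq : A₁ = A₂ := by
      apply Multiset.map_injective (f := fun a : ZMod p => -a) neg_injective
      rw [← hroots A₁, ← hroots A₂, hfeq]
    rw [hrec₁, hrec₂, hAeq]
  constructor
  · intro b s hs
    rw [Finset.card_le_one]
    intro m₁ h₁ m₂ h₂
    obtain ⟨c₁, mem₁, s₁⟩ := hs m₁ h₁
    obtain ⟨c₂, mem₂, s₂⟩ := hs m₂ h₂
    exact uniq b m₁ m₂ c₁ mem₁ s₁ c₂ mem₂ s₂
  · have hinj : Function.Injective ψ := fun a b hab => congrArg Prod.fst hab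
    rw [hrange, ← Set.image_univ, Set.ncard_image_of_injective _ hinj, Set.ncard_univ,
      Nat.card_eq_fintype_card, ZMod.card]
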